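/- arXiv:2004.04772 — 11 statements merged into one kernel-verified Lean document; each statement's English description precedes it below -/
import Mathlib

section
/- Let w : Fin n → ℝ be a frequency vector with w_1 ≥ w_2 ≥ ... ≥ w_n > 0, let q > 0 and φ ∈ (0,1], and suppose w_1^q ≥ φ · Σ_j w_j^q (w has an ℓ_q φ-heavy hitter). Let f(t) = Σ_{j=1}^m a_j t^{p_j} where a_j ≥ 0, not all a_j are zero, and p_j ≥ q for all j. Then for all i, f(w_i) / (Σ_{k=1}^n f(w_k)) ≤ (1/φ) · w_i^q / (Σ_{k=1}^n w_k^q). That is, ℓ_q sampling emulates pps sampling for every nonnegative linear combination of moment functions t^p with p ≥ q, with overhead at most 1/φ. -/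
/-- with an ℓ_q φ-heavy hitter (the most frequent key), ℓ_q sampling
emulates pps sampling for every nonnegative linear combination of moment functions
`t^p` with `p ≥ q`, with overhead at most `1/φ`. -/
theorem stmt_5 {n m : ℕ} (hn : 0 < n) (w : Fin n → ℝ)
    (hpos : ∀ i, 0 < w i) (hmono : ∀ i j : Fin n, i ≤ j → w j ≤ w i)
    (q φ : ℝ) (hq : 0 < q) (hφ0 : 0 < φ) (hφ1 : φ ≤ 1)
    (hHH : w ⟨0, hn⟩ ^ q ≥ φ * ∑ j, w j ^ q)
    (a : Fin m → ℝ) (ha : ∀ j, 0 ≤ a j) (hane : ∃ j, a j ≠ 0)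
    (p : Fin m → ℝ) (hp : ∀ j, q ≤ p j) :
    ∀ i : Fin n,
      (∑ j, a j * w i ^ p j) / (∑ k, ∑ j, a j * w k ^ p j)
        ≤ (1 / φ) * (w i ^ q / ∑ k, w k ^ q) := by
  intro i
  set i0 : Fin n := ⟨0, hn⟩
  have hw0 : 0 < w i0 := hpos i0
  -- f(x) values are nonneg
  have hfnn : ∀ k : Fin n, 0 ≤ ∑ j, a j * w k ^ p j := by
    intro k
    exact Finset.sum_nonneg fun j _ =>
      mul_nonneg (ha j) (Real.rpow_pos_of_pos (hpos k) _).le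
  -- f(w i0) > 0
  obtain ⟨j0, hj0⟩ := hane
  have hf0 : 0 < ∑ j, a j * w i0 ^ p j := by
    apply Finset.sum_pos' (fun j _ =>
      mul_nonneg (ha j) (Real.rpow_pos_of_pos hw0 _).le)
    exact ⟨j0, Finset.mem_univ _, mul_pos (lt_of_le_of_ne (ha j0) (Ne.symm hj0))
      (Real.rpow_pos_of_pos hw0 _)⟩
  have hS : 0 < ∑ k, ∑ j, a j * w k ^ p j :=
    lt_of_lt_of_le hf0 (Finset.single_le_sum (fun k _ => hfnn k) (Finset.mem_univ i0))
  have hQ : (0:ℝ) < ∑ k, w k ^ q :=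
    Finset.sum_pos (fun k _ => Real.rpow_pos_of_pos (hpos k) q) ⟨i0, Finset.mem_univ i0⟩
  have hw0q : 0 < w i0 ^ q := Real.rpow_pos_of_pos hw0 q
  have hwi0 : w i ≤ w i0 := hmono i0 i (by simp [Fin.le_def, i0])
  -- key: f(w i) * (w i0)^q ≤ (w i)^q * f(w i0)
  have hkey : (∑ j, a j * w i ^ p j) * w i0 ^ q ≤ w i ^ q * ∑ j, a j * w i0 ^ p j := by
    rw [Finset.sum_mul, Finset.mul_sum]
    apply Finset.sum_le_sum
    intro j _
    have h1 : w i ^ p j * w i0 ^ q ≤ w i ^ q * w i0 ^ p j := by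
      have hr : (w i / w i0) ^ p j ≤ (w i / w i0) ^ q :=
        Real.rpow_le_rpow_of_exponent_ge (div_pos (hpos i) hw0)
          ((div_le_one hw0).mpr hwi0) (hp j)
      rw [Real.div_rpow (hpos i).le hw0.le, Real.div_rpow (hpos i).le hw0.le] at hr
      rw [div_le_div_iff₀ (Real.rpow_pos_of_pos hw0 _) (Real.rpow_pos_of_pos hw0 _)] at hr
      linarith [hr]
    calc a j * w i ^ p j * w i0 ^ q = a j * (w i ^ p j * w i0 ^ q) := by ring
      _ ≤ a j * (w i ^ q * w i0 ^ p j) := mul_le_mul_of_nonneg_left h1 (ha j)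
      _ = w i ^ q * (a j * w i0 ^ p j) := by ring
  -- chain
  have step1 : (∑ j, a j * w i ^ p j) / (∑ k, ∑ j, a j * w k ^ p j)
      ≤ (∑ j, a j * w i ^ p j) / (∑ j, a j * w i0 ^ p j) :=
    div_le_div_of_nonneg_left (hfnn i) hf0
      (Finset.single_le_sum (fun k _ => hfnn k) (Finset.mem_univ i0))
  have step2 : (∑ j, a j * w i ^ p j) / (∑ j, a j * w i0 ^ p j) ≤ w i ^ q / w i0 ^ q := by
    rw [div_le_div_iff₀ hf0 hw0q]
    linarith [hkey]
  have step3 : w i ^ q / w i0 ^ q ≤ (1 / φ) * (w i ^ q / ∑ k, w k ^ q) := by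
    have h : w i ^ q / w i0 ^ q ≤ w i ^ q / (φ * ∑ k, w k ^ q) :=
      div_le_div_of_nonneg_left (Real.rpow_pos_of_pos (hpos i) q).le
        (mul_pos hφ0 hQ) hHH
    calc w i ^ q / w i0 ^ q ≤ w i ^ q / (φ * ∑ k, w k ^ q) := h
      _ = (1 / φ) * (w i ^ q / ∑ k, w k ^ q) := by
        field_simp
  exact step1.trans (step2.trans step3)
end

section
/- Let w : Fin n → ℝ be a frequency vector with w_1 ≥ w_2 ≥ ... ≥ w_n > 0 satisfying w_i/w_1 ≤ c·i^{−α} for all i (subZipf[α,c,n]) with c > 0 and α ≥ 1. Then for every p ≥ 2, the overhead of emulating ℓ_p sampling by ℓ_2 sampling satisfies max_{1≤i≤n} [(w_i^p / Σ_j w_j^p) / (w_i^2 / Σ_j w_j^2)] ≤ 1.65 · c². -/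
open Finset

lemma sum_inv_sq_le (n : ℕ) :
    ∑ i ∈ Finset.range n, (1 : ℝ) / ((i : ℝ) + 1) ^ 2 ≤ 1.65 := by
  have h1 : ∑ i ∈ Finset.range n, (1 : ℝ) / ((i : ℝ) + 1) ^ 2
      ≤ Real.pi ^ 2 / 6 := by
    have hsum := hasSum_zeta_two
    have h2 : ∑ k ∈ Finset.range (n + 1), (1 : ℝ) / (k : ℝ) ^ 2
        = ∑ i ∈ Finset.range n, (1 : ℝ) / ((i : ℝ) + 1) ^ 2 + 1 / (0 : ℝ) ^ 2 := by
      rw [Finset.sum_range_succ']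
      congr 1
      · apply Finset.sum_congr rfl
        intro i _
        push_cast
        ring_nf
      · norm_num
    have h3 := sum_le_hasSum (Finset.range (n + 1))
      (fun i _ => by positivity) hsum
    rw [h2] at h3
    simpa using h3
  have hpi := Real.pi_lt_d6
  nlinarith [h1, hpi, Real.pi_pos]

/-- for subZipf[α,c,n] frequencies with α ≥ 1, the overhead of emulating
ℓ_p sampling (p ≥ 2) by ℓ_2 sampling is at most `1.65 · c²`. -/
theorem stmt_7 {n : ℕ} (hn : 0 < n) (w : Fin n → ℝ)
    (hpos : ∀ i, 0 < w i) (hmono : ∀ i j : Fin n, i ≤ j → w j ≤ w i)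
    (c α : ℝ) (hc : 0 < c) (hα : 1 ≤ α)
    (hsub : ∀ i : Fin n, w i / w ⟨0, hn⟩ ≤ c * ((i : ℝ) + 1) ^ (-α)) :
    ∀ p : ℝ, 2 ≤ p →
      (univ.sup' ⟨⟨0, hn⟩, mem_univ _⟩ fun i : Fin n =>
          (w i ^ p / ∑ j, w j ^ p) / (w i ^ (2 : ℝ) / ∑ j, w j ^ (2 : ℝ)))
        ≤ 1.65 * c ^ 2 := by
  intro p hp
  set w1 := w ⟨0, hn⟩ with hw1def
  have hw1 : 0 < w1 := hpos _
  -- Step C: S₂ / w1² ≤ 1.65 c²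
  have hS2 : (∑ j, w j ^ (2 : ℝ)) ≤ 1.65 * c ^ 2 * w1 ^ (2 : ℝ) := by
    have key : ∀ j : Fin n, w j ^ (2 : ℝ) ≤ c ^ 2 * (1 / ((j : ℝ) + 1) ^ 2) * w1 ^ (2 : ℝ) := by
      intro j
      have hj1 : (1 : ℝ) ≤ (j : ℝ) + 1 := by
        have : (0:ℝ) ≤ ((j:ℕ) : ℝ) := Nat.cast_nonneg _
        linarith
      have hratio : w j / w1 ≤ c * ((j : ℝ) + 1) ^ (-α) := hsub j
      have hrnn : 0 ≤ w j / w1 := div_nonneg (hpos j).le hw1.le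
      have hsq : (w j / w1) ^ 2 ≤ (c * ((j : ℝ) + 1) ^ (-α)) ^ 2 := by
        exact pow_le_pow_left₀ hrnn hratio 2
      have hexp : (((j : ℝ) + 1) ^ (-α)) ^ 2 ≤ 1 / ((j : ℝ) + 1) ^ 2 := by
        rw [← Real.rpow_natCast (((j : ℝ) + 1) ^ (-α)) 2, ← Real.rpow_mul (by positivity)]
        have : ((j : ℝ) + 1) ^ (-α * (2 : ℕ)) ≤ ((j : ℝ) + 1) ^ (-2 : ℝ) :=
          Real.rpow_le_rpow_of_exponent_le hj1 (by push_cast; nlinarith)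
        calc ((j : ℝ) + 1) ^ (-α * ((2 : ℕ) : ℝ)) ≤ ((j : ℝ) + 1) ^ (-2 : ℝ) := this
          _ = 1 / ((j : ℝ) + 1) ^ 2 := by
              rw [Real.rpow_neg (by positivity), one_div]
              norm_num [Real.rpow_natCast]
      have h2 : (w j / w1) ^ 2 ≤ c ^ 2 * (1 / ((j : ℝ) + 1) ^ 2) := by
        calc (w j / w1) ^ 2 ≤ (c * ((j : ℝ) + 1) ^ (-α)) ^ 2 := hsq
          _ = c ^ 2 * (((j : ℝ) + 1) ^ (-α)) ^ 2 := by ring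
          _ ≤ c ^ 2 * (1 / ((j : ℝ) + 1) ^ 2) := by
              exact mul_le_mul_of_nonneg_left hexp (by positivity)
      have := mul_le_mul_of_nonneg_right h2 (le_of_lt (pow_pos hw1 2))
      rw [div_pow, div_mul_cancel₀] at this
      · rw [Real.rpow_two, Real.rpow_two]; linarith
      · positivity
    calc (∑ j, w j ^ (2 : ℝ))
        ≤ ∑ j : Fin n, c ^ 2 * (1 / ((j : ℝ) + 1) ^ 2) * w1 ^ (2 : ℝ) :=
          Finset.sum_le_sum fun j _ => key j
      _ = (∑ j : Fin n, 1 / ((j : ℝ) + 1) ^ 2) * (c ^ 2 * w1 ^ (2 : ℝ)) := by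
          rw [Finset.sum_mul]; congr 1; ext j; ring
      _ ≤ 1.65 * (c ^ 2 * w1 ^ (2 : ℝ)) := by
          apply mul_le_mul_of_nonneg_right _ (by positivity)
          rw [Fin.sum_univ_eq_sum_range (fun k : ℕ => 1 / ((k : ℝ) + 1) ^ 2)]
          exact sum_inv_sq_le n
      _ = 1.65 * c ^ 2 * w1 ^ (2 : ℝ) := by ring
  -- main bound, per i
  apply Finset.sup'_le
  intro i _
  have hSp_pos : 0 < ∑ j, w j ^ p :=
    Finset.sum_pos (fun j _ => Real.rpow_pos_of_pos (hpos j) p) ⟨i, mem_univ i⟩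
  have hS2_pos : 0 < ∑ j, w j ^ (2 : ℝ) :=
    Finset.sum_pos (fun j _ => Real.rpow_pos_of_pos (hpos j) 2) ⟨i, mem_univ i⟩
  have hwi : 0 < w i := hpos i
  have hwi1 : w i ≤ w1 := hmono ⟨0, hn⟩ i (Fin.mk_le_of_le_val (Nat.zero_le _))
  -- A: w i ^ p / w1 ^ p ≤ w i ^ 2 / w1 ^ 2
  have hA : w i ^ p / w1 ^ p ≤ w i ^ (2 : ℝ) / w1 ^ (2 : ℝ) := by
    rw [← Real.div_rpow hwi.le hw1.le, ← Real.div_rpow hwi.le hw1.le]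
    exact Real.rpow_le_rpow_of_exponent_ge (by positivity) (div_le_one_of_le₀ hwi1 hw1.le) hp
  -- B: w1 ^ p ≤ S_p
  have hB : w1 ^ p ≤ ∑ j, w j ^ p := by
    have := Finset.single_le_sum (f := fun j => w j ^ p)
      (fun j _ => (Real.rpow_pos_of_pos (hpos j) p).le) (mem_univ ⟨0, hn⟩)
    exact this
  have hw1p : 0 < w1 ^ p := Real.rpow_pos_of_pos hw1 p
  have step1 : w i ^ p / ∑ j, w j ^ p ≤ w i ^ (2 : ℝ) / w1 ^ (2 : ℝ) := by
    calc w i ^ p / ∑ j, w j ^ p ≤ w i ^ p / w1 ^ p :=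
          div_le_div_of_nonneg_left (Real.rpow_pos_of_pos hwi p).le hw1p hB
      _ ≤ w i ^ (2 : ℝ) / w1 ^ (2 : ℝ) := hA
  have hwi2 : 0 < w i ^ (2 : ℝ) := Real.rpow_pos_of_pos hwi 2
  have hw12 : 0 < w1 ^ (2 : ℝ) := Real.rpow_pos_of_pos hw1 2
  have step2 : (w i ^ p / ∑ j, w j ^ p) / (w i ^ (2 : ℝ) / ∑ j, w j ^ (2 : ℝ))
      ≤ (∑ j, w j ^ (2 : ℝ)) / w1 ^ (2 : ℝ) := by
    have hq : 0 < w i ^ (2 : ℝ) / ∑ j, w j ^ (2 : ℝ) := div_pos hwi2 hS2_pos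
    calc (w i ^ p / ∑ j, w j ^ p) / (w i ^ (2 : ℝ) / ∑ j, w j ^ (2 : ℝ))
        ≤ (w i ^ (2 : ℝ) / w1 ^ (2 : ℝ)) / (w i ^ (2 : ℝ) / ∑ j, w j ^ (2 : ℝ)) := by
          gcongr
      _ = (∑ j, w j ^ (2 : ℝ)) / w1 ^ (2 : ℝ) := by
          field_simp
  calc (w i ^ p / ∑ j, w j ^ p) / (w i ^ (2 : ℝ) / ∑ j, w j ^ (2 : ℝ))
      ≤ (∑ j, w j ^ (2 : ℝ)) / w1 ^ (2 : ℝ) := step2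
    _ ≤ 1.65 * c ^ 2 := by
        rw [div_le_iff₀ hw12]
        linarith [hS2]
end

section
/- Let w : Fin n → ℝ be a frequency vector with w_1 ≥ w_2 ≥ ... ≥ w_n > 0 satisfying w_i/w_1 ≤ c·i^{−α} for all i (subZipf[α,c,n]) with c > 0 and α ≥ 1. Then for every p ≥ 1, the overhead of emulating ℓ_p sampling by ℓ_1 sampling satisfies max_{1≤i≤n} [(w_i^p / Σ_j w_j^p) / (w_i / Σ_j w_j)] ≤ (1 + ln n) · c. -/
open Finset

lemma harmonic_le_log (n : ℕ) :
    ∑ i ∈ Finset.range n, (1:ℝ)/(i+1) ≤ 1 + Real.log n := by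
  induction n with
  | zero => simp
  | succ k ih =>
    rw [Finset.sum_range_succ]
    rcases Nat.eq_zero_or_pos k with hk | hk
    · subst hk; simp
    · have hk' : (0:ℝ) < k := by exact_mod_cast hk
      have hlog : (1:ℝ)/(k+1) ≤ Real.log (k+1) - Real.log k := by
        have h := Real.log_le_sub_one_of_pos (x := (k:ℝ)/(k+1)) (by positivity)
        rw [Real.log_div (ne_of_gt hk') (by positivity)] at h
        have heq : (k:ℝ)/(k+1) - 1 = -(1/(k+1)) := by field_simp; ring
        rw [heq] at h
        linarith
      push_cast
      linarith

/-- for subZipf[α,c,n] frequencies with α ≥ 1, the overhead of emulating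
ℓ_p sampling (p ≥ 1) by ℓ_1 sampling is at most `(1 + ln n) · c`. -/
theorem stmt_8 {n : ℕ} (hn : 0 < n) (w : Fin n → ℝ)
    (hpos : ∀ i, 0 < w i) (hmono : ∀ i j : Fin n, i ≤ j → w j ≤ w i)
    (c α : ℝ) (hc : 0 < c) (hα : 1 ≤ α)
    (hsub : ∀ i : Fin n, w i / w ⟨0, hn⟩ ≤ c * ((i : ℝ) + 1) ^ (-α)) :
    ∀ p : ℝ, 1 ≤ p →
      (univ.sup' ⟨⟨0, hn⟩, mem_univ _⟩ fun i : Fin n =>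
          (w i ^ p / ∑ j, w j ^ p) / (w i / ∑ j, w j))
        ≤ (1 + Real.log n) * c := by
  intro p hp
  set W1 := w ⟨0, hn⟩ with hW1def
  have hW1 : 0 < W1 := hpos _
  have hS1 : 0 < ∑ j, w j := Finset.sum_pos (fun j _ => hpos j) ⟨⟨0, hn⟩, mem_univ _⟩
  have hSp : 0 < ∑ j, w j ^ p :=
    Finset.sum_pos (fun j _ => Real.rpow_pos_of_pos (hpos j) p) ⟨⟨0, hn⟩, mem_univ _⟩
  apply Finset.sup'_le
  intro i _
  have hwi : 0 < w i := hpos i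
  have hle : w i ≤ W1 := hmono ⟨0, hn⟩ i (Fin.mk_le_of_le_val (Nat.zero_le _))
  -- Step 1: the ratio is at most S1 / W1
  have step1 : (w i ^ p / ∑ j, w j ^ p) / (w i / ∑ j, w j) ≤ (∑ j, w j) / W1 := by
    rw [div_le_div_iff₀ (by positivity) hW1, div_mul_eq_mul_div, div_le_iff₀ hSp]
    have hexp : w i ^ p = w i * w i ^ (p - 1) := by
      have h := (Real.rpow_add hwi 1 (p - 1)).symm
      rw [Real.rpow_one] at h
      ring_nf at h ⊢
      exact h.symm
    have hexp1 : W1 ^ p = W1 * W1 ^ (p - 1) := by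
      have h := (Real.rpow_add hW1 1 (p - 1)).symm
      rw [Real.rpow_one] at h
      ring_nf at h ⊢
      exact h.symm
    have h1 : w i ^ (p - 1) ≤ W1 ^ (p - 1) :=
      Real.rpow_le_rpow hwi.le hle (by linarith)
    have h2 : W1 ^ p ≤ ∑ j, w j ^ p :=
      Finset.single_le_sum (f := fun j => w j ^ p)
        (fun j _ => (Real.rpow_pos_of_pos (hpos j) p).le) (mem_univ (⟨0, hn⟩ : Fin n))
    have key : w i ^ p * W1 ≤ w i * W1 ^ p := by
      rw [hexp, hexp1]
      have := mul_le_mul_of_nonneg_left h1 hwi.le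
      nlinarith [Real.rpow_pos_of_pos hW1 (p - 1)]
    calc w i ^ p * W1 ≤ w i * W1 ^ p := key
      _ ≤ w i * ∑ j, w j ^ p := by
          exact mul_le_mul_of_nonneg_left h2 hwi.le
      _ = (∑ j, w j) * (w i / ∑ j, w j) * ∑ j, w j ^ p := by
          field_simp
  -- Step 2: S1 / W1 ≤ (1 + log n) * c
  have step2 : (∑ j, w j) / W1 ≤ (1 + Real.log n) * c := by
    rw [Finset.sum_div]
    have hterm : ∀ j : Fin n, w j / W1 ≤ c * (1 / ((j : ℝ) + 1)) := by
      intro j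
      refine (hsub j).trans ?_
      have hb : (1:ℝ) ≤ (j : ℝ) + 1 := by
        have : (0:ℝ) ≤ (j : ℝ) := Nat.cast_nonneg _
        linarith
      have : ((j : ℝ) + 1) ^ (-α) ≤ ((j : ℝ) + 1) ^ (-(1:ℝ)) :=
        Real.rpow_le_rpow_of_exponent_le hb (by linarith)
      have heq : ((j : ℝ) + 1) ^ (-(1:ℝ)) = 1 / ((j : ℝ) + 1) := by
        rw [Real.rpow_neg_one, one_div]
      nlinarith
    calc ∑ j, w j / W1 ≤ ∑ j : Fin n, c * (1 / ((j : ℝ) + 1)) :=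
          Finset.sum_le_sum fun j _ => hterm j
      _ = c * ∑ j ∈ Finset.range n, (1:ℝ) / (j + 1) := by
          rw [← Finset.mul_sum, Fin.sum_univ_eq_sum_range (fun j => (1:ℝ)/(j+1))]
      _ ≤ c * (1 + Real.log n) := by
          exact mul_le_mul_of_nonneg_left (harmonic_le_log n) hc.le
      _ = (1 + Real.log n) * c := mul_comm _ _
  exact step1.trans step2
end

section
/- Let w : Fin n → ℝ be a frequency vector with w_1 ≥ w_2 ≥ ... ≥ w_n > 0 satisfying w_i/w_1 ≤ c·i^{−α} for all i (subZipf[α,c,n]) with c > 0 and α ≥ 1/2. Then for every p ≥ 2, the overhead of emulating ℓ_p sampling by ℓ_2 sampling satisfies max_{1≤i≤n} [(w_i^p / Σ_j w_j^p) / (w_i^2 / Σ_j w_j^2)] ≤ (1 + ln n) · c². -/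
open Finset

/-- for subZipf[α,c,n] frequencies with α ≥ 1/2, the overhead of
emulating ℓ_p sampling (p ≥ 2) by ℓ_2 sampling is at most `(1 + ln n) · c²`. -/
theorem stmt_9 {n : ℕ} (hn : 0 < n) (w : Fin n → ℝ)
    (hpos : ∀ i, 0 < w i) (hmono : ∀ i j : Fin n, i ≤ j → w j ≤ w i)
    (c α : ℝ) (hc : 0 < c) (hα : 1 / 2 ≤ α)
    (hsub : ∀ i : Fin n, w i / w ⟨0, hn⟩ ≤ c * ((i : ℝ) + 1) ^ (-α)) :
    ∀ p : ℝ, 2 ≤ p →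
      (univ.sup' ⟨⟨0, hn⟩, mem_univ _⟩ fun i : Fin n =>
          (w i ^ p / ∑ j, w j ^ p) / (w i ^ (2 : ℝ) / ∑ j, w j ^ (2 : ℝ)))
        ≤ (1 + Real.log n) * c ^ 2 := by
  intro p hp
  set i0 : Fin n := ⟨0, hn⟩
  have hW1 : 0 < w i0 := hpos i0
  have hSp : 0 < ∑ j, w j ^ p :=
    Finset.sum_pos (fun j _ => Real.rpow_pos_of_pos (hpos j) p) ⟨i0, mem_univ _⟩
  have hS2 : 0 < ∑ j, w j ^ (2 : ℝ) :=
    Finset.sum_pos (fun j _ => Real.rpow_pos_of_pos (hpos j) 2) ⟨i0, mem_univ _⟩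
  -- Step 1: each term ≤ S2 / W1^2
  have key : ∀ i : Fin n,
      (w i ^ p / ∑ j, w j ^ p) / (w i ^ (2 : ℝ) / ∑ j, w j ^ (2 : ℝ))
        ≤ (∑ j, w j ^ (2 : ℝ)) / w i0 ^ (2 : ℝ) := by
    intro i
    have hwi : 0 < w i := hpos i
    have hle : w i ≤ w i0 := hmono i0 i (Fin.mk_le_mk.mpr (Nat.zero_le _))
    have h1 : w i ^ p / w i ^ (2 : ℝ) ≤ w i0 ^ p / w i0 ^ (2 : ℝ) := by
      rw [← Real.rpow_sub hwi, ← Real.rpow_sub hW1]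
      exact Real.rpow_le_rpow hwi.le hle (by linarith)
    have h2 : w i0 ^ p ≤ ∑ j, w j ^ p :=
      Finset.single_le_sum (fun j _ => (Real.rpow_pos_of_pos (hpos j) p).le) (mem_univ i0)
    calc (w i ^ p / ∑ j, w j ^ p) / (w i ^ (2 : ℝ) / ∑ j, w j ^ (2 : ℝ))
        = (w i ^ p / w i ^ (2 : ℝ)) * ((∑ j, w j ^ (2 : ℝ)) / ∑ j, w j ^ p) := by
          rw [div_div_div_comm, div_div_eq_mul_div, mul_div_assoc]
      _ ≤ (w i0 ^ p / w i0 ^ (2 : ℝ)) * ((∑ j, w j ^ (2 : ℝ)) / ∑ j, w j ^ p) :=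
          mul_le_mul_of_nonneg_right h1 (div_nonneg hS2.le hSp.le)
      _ ≤ (w i0 ^ p / w i0 ^ (2 : ℝ)) * ((∑ j, w j ^ (2 : ℝ)) / w i0 ^ p) := by
          exact mul_le_mul_of_nonneg_left
            (div_le_div_of_nonneg_left hS2.le (Real.rpow_pos_of_pos hW1 p) h2)
            (div_nonneg (Real.rpow_nonneg hW1.le _) (Real.rpow_nonneg hW1.le _))
      _ = (∑ j, w j ^ (2 : ℝ)) / w i0 ^ (2 : ℝ) := by
          have hpne := (Real.rpow_pos_of_pos hW1 p).ne'
          have h2ne := (Real.rpow_pos_of_pos hW1 2).ne'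
          field_simp
  -- Step 2: S2 / W1^2 ≤ (1 + log n) * c^2
  have step2 : (∑ j, w j ^ (2 : ℝ)) / w i0 ^ (2 : ℝ) ≤ (1 + Real.log n) * c ^ 2 := by
    have hsum : (∑ j, w j ^ (2 : ℝ)) / w i0 ^ (2 : ℝ)
        = ∑ j : Fin n, (w j / w i0) ^ (2 : ℝ) := by
      rw [Finset.sum_div]
      refine Finset.sum_congr rfl fun j _ => ?_
      rw [Real.div_rpow (hpos j).le hW1.le]
    rw [hsum]
    have hbound : ∀ j : Fin n, (w j / w i0) ^ (2 : ℝ) ≤ c ^ 2 * ((j : ℝ) + 1)⁻¹ := by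
      intro j
      have hj1 : (0:ℝ) < (j : ℝ) + 1 := by positivity
      have hj1' : (1:ℝ) ≤ (j : ℝ) + 1 := le_add_of_nonneg_left (Nat.cast_nonneg _)
      have h1 : (w j / w i0) ^ (2 : ℝ) ≤ (c * ((j : ℝ) + 1) ^ (-α)) ^ (2 : ℝ) :=
        Real.rpow_le_rpow (div_nonneg (hpos j).le hW1.le) (hsub j) (by norm_num)
      refine h1.trans ?_
      rw [Real.mul_rpow hc.le (Real.rpow_nonneg hj1.le _),
        show (2:ℝ) = ((2:ℕ):ℝ) by norm_num, Real.rpow_natCast, Real.rpow_natCast]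
      apply mul_le_mul_of_nonneg_left _ (by positivity)
      have hx : (((j:ℝ)+1) ^ (-α)) ^ (2:ℕ) = ((j:ℝ)+1) ^ (-α * 2) := by
        rw [← Real.rpow_natCast (((j:ℝ)+1) ^ (-α)) 2, ← Real.rpow_mul hj1.le]
        norm_num
      rw [hx]
      calc ((j:ℝ)+1) ^ (-α * 2) ≤ ((j:ℝ)+1) ^ (-1 : ℝ) := by
            apply Real.rpow_le_rpow_of_exponent_le hj1'
            linarith
        _ = ((j : ℝ) + 1)⁻¹ := Real.rpow_neg_one _
    calc ∑ j : Fin n, (w j / w i0) ^ (2 : ℝ)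
        ≤ ∑ j : Fin n, c ^ 2 * ((j : ℝ) + 1)⁻¹ :=
          Finset.sum_le_sum fun j _ => hbound j
      _ = c ^ 2 * ∑ j : Fin n, ((j : ℝ) + 1)⁻¹ := by rw [Finset.mul_sum]
      _ ≤ c ^ 2 * (1 + Real.log n) := by
          apply mul_le_mul_of_nonneg_left _ (by positivity)
          have : ∑ j : Fin n, ((j : ℝ) + 1)⁻¹ = ((harmonic n : ℚ) : ℝ) := by
            rw [harmonic, Fin.sum_univ_eq_sum_range (fun i : ℕ => ((i:ℝ)+1)⁻¹) n]
            push_cast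
            exact Finset.sum_congr rfl fun x _ => by ring
          rw [this]
          exact harmonic_le_one_add_log n
      _ = (1 + Real.log n) * c ^ 2 := by ring
  exact (Finset.sup'_le _ _ fun i _ => (key i).trans step2)
end

section
/- Let w : Fin n → ℝ be a frequency vector with w_1 ≥ w_2 ≥ ... ≥ w_n > 0, and define the probabilities q_i = 1/(i · H_n) for i ∈ {1,...,n}, where H_n = Σ_{i=1}^n 1/i. Then for every monotone nondecreasing nonnegative function f : ℝ → ℝ with Σ_{j=1}^n f(w_j) > 0 and every i: f(w_i) / (Σ_{j=1}^n f(w_j)) ≤ 1/i = H_n · q_i. Hence weighted sampling by q is a universal emulator with overhead at most H_n: for every such f, the pps probabilities p_i = f(w_i)/Σ_j f(w_j) satisfy p_i/q_i ≤ H_n. -/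
/-- with `q_i = 1/(i·H_n)` (index `i : Fin n` has rank `i+1`),
weighted sampling by `q` is a universal emulator with overhead at most `H_n`:
for every monotone nondecreasing nonnegative `f` the pps probability of the key
of rank `i` is at most `1/i = H_n · q_i`, so `p_i / q_i ≤ H_n`. -/
theorem stmt_10 {n : ℕ} (hn : 0 < n) (w : Fin n → ℝ)
    (hpos : ∀ i, 0 < w i) (hmono : ∀ i j : Fin n, i ≤ j → w j ≤ w i)
    (f : ℝ → ℝ) (hf : Monotone f) (hf0 : ∀ t, 0 ≤ f t)
    (hfpos : 0 < ∑ j, f (w j)) :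
    ∀ i : Fin n,
      f (w i) / (∑ j, f (w j)) ≤ 1 / ((i : ℝ) + 1) ∧
      1 / ((i : ℝ) + 1) =
        (∑ j : Fin n, 1 / ((j : ℝ) + 1)) *
          (1 / (((i : ℝ) + 1) * ∑ j : Fin n, 1 / ((j : ℝ) + 1))) ∧
      (f (w i) / (∑ j, f (w j))) /
          (1 / (((i : ℝ) + 1) * ∑ j : Fin n, 1 / ((j : ℝ) + 1)))
        ≤ ∑ j : Fin n, 1 / ((j : ℝ) + 1) := by
  intro i
  have hin : (0 : ℝ) < (i : ℝ) + 1 := by positivity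
  have hH : (0 : ℝ) < ∑ j : Fin n, 1 / ((j : ℝ) + 1) := by
    apply Finset.sum_pos
    · intro j _; positivity
    · exact Finset.univ_nonempty_iff.mpr ⟨⟨0, hn⟩⟩
  have key : f (w i) * ((i : ℝ) + 1) ≤ ∑ j, f (w j) := by
    have h1 : ((i : ℕ) + 1 : ℕ) • f (w i) ≤ ∑ j ∈ Finset.Iic i, f (w j) := by
      rw [← Fin.card_Iic i, ← Finset.sum_const]
      exact Finset.sum_le_sum fun j hj => hf (hmono j i (Finset.mem_Iic.mp hj))
    have h2 : ∑ j ∈ Finset.Iic i, f (w j) ≤ ∑ j, f (w j) :=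
      Finset.sum_le_sum_of_subset_of_nonneg (Finset.subset_univ _)
        (fun j _ _ => hf0 _)
    calc f (w i) * ((i : ℝ) + 1) = ((i : ℕ) + 1 : ℕ) • f (w i) := by
          push_cast [nsmul_eq_mul]; ring
      _ ≤ _ := h1.trans h2
  have hp : f (w i) / (∑ j, f (w j)) ≤ 1 / ((i : ℝ) + 1) := by
    rw [div_le_div_iff₀ hfpos hin]
    linarith [key]
  refine ⟨hp, ?_, ?_⟩
  · field_simp
  · have hq : (0 : ℝ) < 1 / (((i : ℝ) + 1) * ∑ j : Fin n, 1 / ((j : ℝ) + 1)) := by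
      positivity
    rw [div_le_iff₀ hq]
    rw [div_le_iff₀ hfpos] at hp ⊢
    calc f (w i) ≤ 1 / ((i : ℝ) + 1) * ∑ j, f (w j) := hp
      _ = (∑ j : Fin n, 1 / ((j : ℝ) + 1)) *
            (1 / (((i : ℝ) + 1) * ∑ j : Fin n, 1 / ((j : ℝ) + 1))) * ∑ j, f (w j) := by
          field_simp
end

section
/- Let w : Fin n → ℝ be a frequency vector with w_1 ≥ w_2 ≥ ... ≥ w_n > 0, and let q : Fin n → ℝ with q_i > 0 for all i. Then for every monotone nondecreasing nonnegative function f : ℝ → ℝ with Σ_{j=1}^n f(w_j) > 0: max_{1≤i≤n} f(w_i) / ((Σ_{j=1}^n f(w_j)) · q_i) ≤ max_{1≤i≤n} 1/(i · q_i). That is, the universal emulation overhead of q is at most max_i 1/(i·q_i). -/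
open Finset

/-- for any positive probabilities `q`, the universal emulation
overhead on a nonincreasing positive frequency vector is at most
`max_i 1/(i·q_i)`: for every monotone nondecreasing nonnegative `f`,
`max_i f(w_i)/((∑_j f(w_j))·q_i) ≤ max_i 1/(i·q_i)`. -/
theorem stmt_11 {n : ℕ} (hn : 0 < n) (w : Fin n → ℝ)
    (hpos : ∀ i, 0 < w i) (hmono : ∀ i j : Fin n, i ≤ j → w j ≤ w i)
    (q : Fin n → ℝ) (hq : ∀ i, 0 < q i)
    (f : ℝ → ℝ) (hf : Monotone f) (hf0 : ∀ t, 0 ≤ f t)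
    (hfpos : 0 < ∑ j, f (w j)) :
    (univ.sup' ⟨⟨0, hn⟩, mem_univ _⟩ fun i : Fin n =>
        f (w i) / ((∑ j, f (w j)) * q i))
      ≤ univ.sup' ⟨⟨0, hn⟩, mem_univ _⟩ fun i : Fin n =>
        1 / (((i : ℝ) + 1) * q i) := by
  apply sup'_le
  intro i _
  refine le_trans ?_ (le_sup' _ (mem_univ i))
  have key : ((i : ℝ) + 1) * f (w i) ≤ ∑ j, f (w j) := by
    have h1 : ∑ j ∈ Iic i, f (w i) ≤ ∑ j ∈ Iic i, f (w j) := by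
      apply sum_le_sum
      intro j hj
      exact hf (hmono j i (mem_Iic.mp hj))
    have h2 : ∑ j ∈ Iic i, f (w j) ≤ ∑ j, f (w j) :=
      sum_le_sum_of_subset_of_nonneg (subset_univ _) (fun j _ _ => hf0 _)
    have h3 : ∑ j ∈ Iic i, f (w i) = ((i : ℝ) + 1) * f (w i) := by
      rw [sum_const, Fin.card_Iic, nsmul_eq_mul]
      push_cast
      ring
    linarith
  rw [div_le_div_iff₀ (mul_pos hfpos (hq i)) (mul_pos (by positivity) (hq i))]
  have hq' := (hq i).le
  calc f (w i) * (((i : ℝ) + 1) * q i) = (((i : ℝ) + 1) * f (w i)) * q i := by ring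
    _ ≤ (∑ j, f (w j)) * q i := by nlinarith [hq i]
    _ = 1 * ((∑ j, f (w j)) * q i) := by ring
end

section
/- Let q : Fin n → ℝ be a probability vector: q_i > 0 for all i and Σ_{i=1}^n q_i = 1. Then max_{1≤i≤n} 1/(i · q_i) ≥ H_n, where H_n = Σ_{i=1}^n 1/i. Consequently, the universal emulation overhead of any sampling probability vector is at least H_n. -/
open Finset

lemma stmt_12_aux {n : ℕ} (q : Fin n → ℝ)
    (hq : ∀ i, 0 < q i) (hsum : ∑ i, q i = 1) (M : ℝ) (hMpos : 0 < M)
    (h : ∀ i : Fin n, 1 / (((i : ℝ) + 1) * q i) ≤ M) :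
    (∑ i : Fin n, 1 / ((i : ℝ) + 1)) ≤ M := by
  have hpos : ∀ i : Fin n, 0 < ((i : ℝ) + 1) * q i := by
    intro i
    have := hq i
    positivity
  have hle : ∀ i : Fin n, 1 / ((i : ℝ) + 1) ≤ M * q i := by
    intro i
    have h1 := h i
    rw [div_le_iff₀ (hpos i)] at h1
    rw [div_le_iff₀ (by positivity : (0:ℝ) < (i : ℝ) + 1)]
    calc (1:ℝ) ≤ M * (((i : ℝ) + 1) * q i) := h1
      _ = M * q i * ((i : ℝ) + 1) := by ring
  calc ∑ i : Fin n, 1 / ((i : ℝ) + 1) ≤ ∑ i, M * q i :=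
        Finset.sum_le_sum fun i _ => hle i
    _ = M := by rw [← mul_sum, hsum, mul_one]

/-- for any probability vector `q` on `n` ranked keys, the universal
emulation overhead `max_i 1/(i·q_i)` is at least the harmonic number `H_n`. -/
theorem stmt_12 {n : ℕ} (hn : 0 < n) (q : Fin n → ℝ)
    (hq : ∀ i, 0 < q i) (hsum : ∑ i, q i = 1) :
    (∑ i : Fin n, 1 / ((i : ℝ) + 1)) ≤
      univ.sup' ⟨⟨0, hn⟩, mem_univ _⟩ fun i : Fin n =>
        1 / (((i : ℝ) + 1) * q i) := by
  have hle : ∀ i : Fin n,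
      1 / (((i : ℝ) + 1) * q i) ≤
        univ.sup' ⟨⟨0, hn⟩, mem_univ _⟩ fun i : Fin n =>
          1 / (((i : ℝ) + 1) * q i) := fun i => le_sup' (fun i : Fin n => 1 / (((i : ℝ) + 1) * q i)) (mem_univ i)
  refine stmt_12_aux q hq hsum _ ?_ hle
  refine lt_of_lt_of_le ?_ (hle ⟨0, hn⟩)
  have := hq ⟨0, hn⟩
  positivity
end

section
/- Let w : Fin n → ℝ be strictly decreasing with w_1 > w_2 > ... > w_n > 0, and fix i ∈ {1,...,n}. Then the threshold function f(t) = 1 if t ≥ w_i and f(t) = 0 otherwise is monotone nondecreasing, and it satisfies f(w_i) / (Σ_{j=1}^n f(w_j)) = 1/i. Consequently, for every probability vector q with q_j > 0 for all j, the universal emulation overhead sup_{f monotone nondecreasing, Σ_j f(w_j) > 0} max_j f(w_j)/((Σ_k f(w_k))·q_j) equals max_j 1/(j·q_j). -/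
open Finset

/-- with strictly decreasing frequencies, the threshold function at
`w i` is monotone nondecreasing and has pps probability exactly `1/i` for the key of
rank `i`; consequently the universal emulation overhead of any positive `q` is
exactly `max_j 1/(j·q_j)`. -/
theorem stmt_13 {n : ℕ} (hn : 0 < n) (w : Fin n → ℝ)
    (hpos : ∀ i, 0 < w i) (hstrict : ∀ i j : Fin n, i < j → w j < w i)
    (q : Fin n → ℝ) (hq : ∀ j, 0 < q j) :
    (∀ i : Fin n,
      Monotone (fun t : ℝ => if w i ≤ t then (1 : ℝ) else 0) ∧
      (if w i ≤ w i then (1 : ℝ) else 0) /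
          (∑ j, if w i ≤ w j then (1 : ℝ) else 0) = 1 / ((i : ℝ) + 1)) ∧
    sSup {M : ℝ | ∃ f : ℝ → ℝ, Monotone f ∧ (∀ t, 0 ≤ f t) ∧
          0 < ∑ j, f (w j) ∧
          M = univ.sup' ⟨⟨0, hn⟩, mem_univ _⟩ fun j : Fin n =>
                f (w j) / ((∑ k, f (w k)) * q j)}
      = univ.sup' ⟨⟨0, hn⟩, mem_univ _⟩ fun j : Fin n =>
          1 / (((j : ℝ) + 1) * q j) := by
  have hiff : ∀ i j : Fin n, (w i ≤ w j) ↔ j ≤ i := by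
    intro i j
    constructor
    · intro h
      by_contra hj
      push_neg at hj
      exact absurd h (not_le.mpr (hstrict i j hj))
    · intro h
      rcases eq_or_lt_of_le h with h | h
      · exact le_of_eq (congrArg w h.symm)
      · exact (hstrict j i h).le
  have hmono : ∀ i : Fin n, Monotone (fun t : ℝ => if w i ≤ t then (1 : ℝ) else 0) := by
    intro i s t hst
    dsimp only
    by_cases h : w i ≤ s
    · rw [if_pos h, if_pos (h.trans hst)]
    · rw [if_neg h]
      split <;> norm_num
  have hsum : ∀ i : Fin n, (∑ j, if w i ≤ w j then (1:ℝ) else 0) = (i : ℝ) + 1 := by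
    intro i
    have : (∑ j, if w i ≤ w j then (1:ℝ) else 0) = ∑ j, if j ≤ i then (1:ℝ) else 0 :=
      Finset.sum_congr rfl fun j _ => by simp [hiff i j]
    rw [this, Finset.sum_boole]
    have hfi : univ.filter (fun j : Fin n => j ≤ i) = Finset.Iic i := by ext j; simp
    rw [hfi, Fin.card_Iic]
    push_cast
    ring
  -- monotone lower bound on the sum
  have hkey : ∀ (f : ℝ → ℝ), Monotone f → (∀ t, 0 ≤ f t) → ∀ j : Fin n,
      ((j : ℝ) + 1) * f (w j) ≤ ∑ k, f (w k) := by
    intro f hf hf0 j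
    have h1 : ∑ k ∈ Finset.Iic j, f (w j) ≤ ∑ k ∈ Finset.Iic j, f (w k) :=
      Finset.sum_le_sum fun k hk => hf ((hiff j k).mpr (Finset.mem_Iic.mp hk))
    have h2 : ∑ k ∈ Finset.Iic j, f (w k) ≤ ∑ k, f (w k) :=
      Finset.sum_le_sum_of_subset_of_nonneg (Finset.subset_univ _)
        (fun k _ _ => hf0 _)
    have h3 : ∑ k ∈ Finset.Iic j, f (w j) = ((j : ℝ) + 1) * f (w j) := by
      rw [Finset.sum_const, Fin.card_Iic]
      push_cast
      ring
    linarith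
  refine ⟨fun i => ⟨hmono i, by rw [hsum i, if_pos le_rfl]⟩, ?_⟩
  -- the RHS
  set R : ℝ := univ.sup' ⟨⟨0, hn⟩, mem_univ _⟩ fun j : Fin n =>
      1 / (((j : ℝ) + 1) * q j) with hR
  -- upper bound
  have hub : ∀ M ∈ {M : ℝ | ∃ f : ℝ → ℝ, Monotone f ∧ (∀ t, 0 ≤ f t) ∧
      0 < ∑ j, f (w j) ∧
      M = univ.sup' ⟨⟨0, hn⟩, mem_univ _⟩ fun j : Fin n =>
            f (w j) / ((∑ k, f (w k)) * q j)}, M ≤ R := by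
    rintro M ⟨f, hf, hf0, hS, rfl⟩
    apply Finset.sup'_le
    intro j _
    have hmid : f (w j) / ((∑ k, f (w k)) * q j) ≤ 1 / (((j : ℝ) + 1) * q j) := by
      rw [div_le_div_iff₀ (mul_pos hS (hq j)) (mul_pos (by positivity) (hq j))]
      have := hkey f hf hf0 j
      have hqj := (hq j).le
      nlinarith [hq j, hf0 (w j)]
    rw [hR]
    exact hmid.trans (Finset.le_sup' (f := fun j : Fin n => 1 / (((j : ℝ) + 1) * q j)) (mem_univ j))
  -- membership
  obtain ⟨i, _, hi⟩ := Finset.exists_mem_eq_sup' (⟨⟨0, hn⟩, mem_univ _⟩ :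
      (univ : Finset (Fin n)).Nonempty) fun j : Fin n => 1 / (((j : ℝ) + 1) * q j)
  have hmem : R ∈ {M : ℝ | ∃ f : ℝ → ℝ, Monotone f ∧ (∀ t, 0 ≤ f t) ∧
      0 < ∑ j, f (w j) ∧
      M = univ.sup' ⟨⟨0, hn⟩, mem_univ _⟩ fun j : Fin n =>
            f (w j) / ((∑ k, f (w k)) * q j)} := by
    refine ⟨fun t => if w i ≤ t then (1:ℝ) else 0, hmono i,
      fun t => by dsimp only; split <;> norm_num, ?_, ?_⟩
    · rw [hsum i]; positivity
    · -- R = sup' of f_i values; prove by antisymmetry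
      have hle : (univ.sup' ⟨⟨0, hn⟩, mem_univ _⟩ fun j : Fin n =>
          (if w i ≤ w j then (1:ℝ) else 0) / ((∑ k, if w i ≤ w k then (1:ℝ) else 0) * q j)) ≤ R :=
        hub _ ⟨_, hmono i, fun t => by split <;> norm_num,
          by rw [hsum i]; positivity, rfl⟩
      have hge : R ≤ univ.sup' ⟨⟨0, hn⟩, mem_univ _⟩ fun j : Fin n =>
          (if w i ≤ w j then (1:ℝ) else 0) / ((∑ k, if w i ≤ w k then (1:ℝ) else 0) * q j) := by
        rw [hR, hi]
        have : (1:ℝ) / (((i : ℝ) + 1) * q i)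
            = (if w i ≤ w i then (1:ℝ) else 0) / ((∑ k, if w i ≤ w k then (1:ℝ) else 0) * q i) := by
          rw [hsum i, if_pos le_rfl]
        rw [this]
        exact Finset.le_sup' (f := fun j : Fin n =>
          (if w i ≤ w j then (1:ℝ) else 0) / ((∑ k, if w i ≤ w k then (1:ℝ) else 0) * q j)) (mem_univ i)
      exact (le_antisymm hle hge).symm
  exact le_antisymm (csSup_le ⟨R, hmem⟩ hub) (le_csSup ⟨R, hub⟩ hmem)
end

section
/- Let w : Fin n → ℝ be strictly decreasing with w_1 > w_2 > ... > w_n > 0, and let q : Fin n → ℝ with q_i > 0 for all i. Then the universal estimation overhead satisfies: sup over all monotone nondecreasing nonnegative f : ℝ → ℝ with Σ_{j=1}^n f(w_j) > 0 of Σ_{i=1}^n (f(w_i)/Σ_{j=1}^n f(w_j))² / q_i equals max_{1≤i≤n} (1/i²) · Σ_{j=1}^i 1/q_j. -/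
open Finset


lemma sq_bound_aux (u : ℕ → ℝ) (hu0 : ∀ i, 0 ≤ u i) (hum : ∀ i j, i ≤ j → u j ≤ u i) :
    ∀ n, ∑ i ∈ Finset.range n, (2*(i:ℝ)+1) * u i^2 ≤ (∑ i ∈ Finset.range n, u i)^2 := by
  intro n
  induction n with
  | zero => simp
  | succ n ih =>
    rw [Finset.sum_range_succ, Finset.sum_range_succ]
    have h1 : (n:ℝ) * u n ≤ ∑ i ∈ Finset.range n, u i := by
      have : ∑ i ∈ Finset.range n, u n ≤ ∑ i ∈ Finset.range n, u i :=
        Finset.sum_le_sum fun i hi => hum i n (Finset.mem_range.mp hi).le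
      simpa [mul_comm] using this
    nlinarith [hu0 n, mul_le_mul_of_nonneg_right h1 (hu0 n)]

lemma main_ineq (n : ℕ) (u b : ℕ → ℝ) (M : ℝ) (hM : 0 ≤ M)
    (hu0 : ∀ i, 0 ≤ u i) (hum : ∀ i j, i ≤ j → u j ≤ u i) (hun : u n = 0)
    (hB : ∀ i < n, ∑ j ∈ Finset.range (i+1), b j ≤ M * ((i:ℝ)+1)^2) :
    ∑ i ∈ Finset.range n, u i ^ 2 * b i ≤ M * (∑ i ∈ Finset.range n, u i)^2 := by
  have habel1 : ∀ m, ∑ i ∈ Finset.range m, u i^2 * b i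
      = ∑ i ∈ Finset.range m, (∑ j ∈ Finset.range (i+1), b j) * (u i^2 - u (i+1)^2)
        + (∑ j ∈ Finset.range m, b j) * u m ^2 := by
    intro m
    induction m with
    | zero => simp
    | succ m ih =>
      rw [Finset.sum_range_succ, ih,
        Finset.sum_range_succ (fun i => (∑ j ∈ Finset.range (i+1), b j) * (u i^2 - u (i+1)^2)),
        Finset.sum_range_succ b]
      ring
  have habel2 : ∀ m, ∑ i ∈ Finset.range m, ((i:ℝ)+1)^2 * (u i^2 - u (i+1)^2)
      = ∑ i ∈ Finset.range m, (2*(i:ℝ)+1) * u i^2 - (m:ℝ)^2 * u m^2 := by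
    intro m
    induction m with
    | zero => simp
    | succ m ih =>
      rw [Finset.sum_range_succ, ih,
        Finset.sum_range_succ (fun i => (2*(i:ℝ)+1) * u i^2)]
      push_cast
      ring
  calc ∑ i ∈ Finset.range n, u i ^ 2 * b i
      = ∑ i ∈ Finset.range n, (∑ j ∈ Finset.range (i+1), b j) * (u i^2 - u (i+1)^2) := by
        rw [habel1 n, hun]; ring_nf
    _ ≤ ∑ i ∈ Finset.range n, (M * ((i:ℝ)+1)^2) * (u i^2 - u (i+1)^2) := by
        apply Finset.sum_le_sum
        intro i hi
        have hΔ : 0 ≤ u i^2 - u (i+1)^2 := by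
          have := pow_le_pow_left₀ (hu0 (i+1)) (hum i (i+1) (Nat.le_succ i)) 2
          linarith
        exact mul_le_mul_of_nonneg_right (hB i (Finset.mem_range.mp hi)) hΔ
    _ = M * ∑ i ∈ Finset.range n, ((i:ℝ)+1)^2 * (u i^2 - u (i+1)^2) := by
        rw [Finset.mul_sum]; apply Finset.sum_congr rfl; intros; ring
    _ = M * ∑ i ∈ Finset.range n, (2*(i:ℝ)+1) * u i^2 := by rw [habel2 n, hun]; ring
    _ ≤ M * (∑ i ∈ Finset.range n, u i)^2 :=
        mul_le_mul_of_nonneg_left (sq_bound_aux u hu0 hum n) hM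

lemma sum_Iic_eq {n : ℕ} (g : Fin n → ℝ) (i : Fin n) :
    ∑ j ∈ Finset.Iic i, g j
      = ∑ j ∈ Finset.range (i.1+1), (if h : j < n then g ⟨j,h⟩ else 0) := by
  have h0 : Finset.Iic i = Finset.univ.filter (fun j => j ≤ i) := by
    ext j; simp
  have h1 : ∑ j ∈ Finset.Iic i, g j = ∑ j : Fin n, if j ≤ i then g j else 0 := by
    rw [h0, Finset.sum_filter]
  have h2 : ∑ j : Fin n, (if j ≤ i then g j else 0)
      = ∑ j ∈ Finset.range n, (if h : j < n then (if (⟨j,h⟩:Fin n) ≤ i then g ⟨j,h⟩ else 0) else 0) := by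
    rw [← Fin.sum_univ_eq_sum_range]
    apply Finset.sum_congr rfl
    intro j _
    simp
  have h3 : ∑ j ∈ Finset.range n, (if h : j < n then (if (⟨j,h⟩:Fin n) ≤ i then g ⟨j,h⟩ else 0) else 0)
      = ∑ j ∈ Finset.range (i.1+1), (if h : j < n then g ⟨j,h⟩ else 0) := by
    rw [← Finset.sum_subset (Finset.range_subset_range.mpr i.isLt)]
    · apply Finset.sum_congr rfl
      intro j hj
      have hj' : j < n := (Nat.lt_succ_iff.mp (Finset.mem_range.mp hj)).trans_lt i.isLt
      rw [dif_pos hj', dif_pos hj']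
      rw [if_pos]
      exact Fin.mk_le_mk.mpr (Nat.lt_succ_iff.mp (Finset.mem_range.mp hj))
    · intro j hj hj2
      by_cases h : j < n
      · rw [dif_pos h, if_neg]
        intro hle
        exact hj2 (Finset.mem_range.mpr (Nat.lt_succ_iff.mpr hle))
      · rw [dif_neg h]
  rw [h1, h2, h3]

/-- for strictly decreasing positive frequencies and positive
sampling probabilities `q`, the universal estimation overhead
`sup_f ∑_i (f(w_i)/∑_j f(w_j))²/q_i` (over monotone nondecreasing nonnegative `f`
with positive total) equals `max_i (1/i²)·∑_{j=1}^i 1/q_j`. -/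
theorem stmt_14 {n : ℕ} (hn : 0 < n) (w : Fin n → ℝ)
    (hpos : ∀ i, 0 < w i) (hstrict : ∀ i j : Fin n, i < j → w j < w i)
    (q : Fin n → ℝ) (hq : ∀ i, 0 < q i) :
    sSup {M : ℝ | ∃ f : ℝ → ℝ, Monotone f ∧ (∀ t, 0 ≤ f t) ∧
          0 < ∑ j, f (w j) ∧
          M = ∑ i, (f (w i) / ∑ j, f (w j)) ^ 2 / q i}
      = univ.sup' ⟨⟨0, hn⟩, mem_univ _⟩ fun i : Fin n =>
          (1 / ((i : ℝ) + 1) ^ 2) * ∑ j ∈ Finset.Iic i, 1 / q j := by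
  set T := {M : ℝ | ∃ f : ℝ → ℝ, Monotone f ∧ (∀ t, 0 ≤ f t) ∧
          0 < ∑ j, f (w j) ∧
          M = ∑ i, (f (w i) / ∑ j, f (w j)) ^ 2 / q i} with hT
  set M := univ.sup' ⟨⟨0, hn⟩, mem_univ _⟩ fun i : Fin n =>
          (1 / ((i : ℝ) + 1) ^ 2) * ∑ j ∈ Finset.Iic i, 1 / q j with hMdef
  -- antitone w
  have waux : ∀ i j : Fin n, i ≤ j → w j ≤ w i := by
    intro i j hij
    rcases eq_or_lt_of_le hij with rfl | h
    · exact le_rfl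
    · exact (hstrict i j h).le
  have hiff : ∀ i₀ j : Fin n, (w i₀ ≤ w j ↔ j ≤ i₀) := by
    intro i₀ j
    constructor
    · intro h
      by_contra hc
      push_neg at hc
      exact absurd h (not_le.mpr (hstrict i₀ j hc))
    · intro h
      exact waux j i₀ h
  have hsum : ∀ i₀ : Fin n, (∑ j : Fin n, if w i₀ ≤ w j then (1:ℝ) else 0) = (i₀:ℝ)+1 := by
    intro i₀
    have h1 : (∑ j : Fin n, if w i₀ ≤ w j then (1:ℝ) else 0)
        = ∑ j : Fin n, if j ≤ i₀ then (1:ℝ) else 0 :=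
      Finset.sum_congr rfl fun j _ => if_congr (hiff i₀ j) rfl rfl
    rw [h1, Finset.sum_boole]
    have hfil : Finset.univ.filter (fun j : Fin n => j ≤ i₀) = Finset.Iic i₀ := by
      ext j; simp
    rw [hfil, Fin.card_Iic]
    push_cast
    ring
  -- each candidate value is attained (threshold functions)
  have hmemb : ∀ i₀ : Fin n,
      ((1/((i₀:ℝ)+1)^2) * ∑ j ∈ Finset.Iic i₀, 1/q j) ∈ T := by
    intro i₀
    refine ⟨fun t => if w i₀ ≤ t then 1 else 0, ?_, ?_, ?_, ?_⟩
    · intro a b hab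
      dsimp only
      split_ifs with h1 h2
      · exact le_rfl
      · exact absurd (h1.trans hab) h2
      · norm_num
      · exact le_rfl
    · intro t; dsimp only; split_ifs <;> norm_num
    · rw [hsum i₀]
      have h0 : (0:ℝ) ≤ ((i₀:ℕ):ℝ) := Nat.cast_nonneg _
      linarith
    · rw [hsum i₀]
      have : ∀ i : Fin n, ((if w i₀ ≤ w i then (1:ℝ) else 0) / ((i₀:ℝ)+1)) ^ 2 / q i
          = if i ≤ i₀ then ((1/((i₀:ℝ)+1)) ^ 2 / q i) else 0 := by
        intro i
        rw [if_congr (hiff i₀ i) rfl rfl]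
        split_ifs with h
        · norm_num
        · norm_num
      rw [Finset.sum_congr rfl (fun i _ => this i)]
      rw [← Finset.sum_filter]
      have hfil : Finset.univ.filter (fun i : Fin n => i ≤ i₀) = Finset.Iic i₀ := by
        ext j; simp
      rw [hfil, Finset.mul_sum]
      apply Finset.sum_congr rfl
      intro j _
      have hc : ((i₀:ℝ)+1) ≠ 0 := by positivity
      field_simp
  -- every element of T is at most M
  have hub : ∀ x ∈ T, x ≤ M := by
    intro x hx
    obtain ⟨f, hfm, hfnn, hfpos, rfl⟩ := hx
    set S := ∑ j, f (w j) with hS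
    set u : ℕ → ℝ := fun i => if h : i < n then f (w ⟨i,h⟩) / S else 0 with hu
    set b : ℕ → ℝ := fun i => if h : i < n then 1 / q ⟨i,h⟩ else 0 with hb
    have hM0 : 0 ≤ M := by
      have h1 := Finset.le_sup' (fun i : Fin n =>
        (1 / ((i : ℝ) + 1) ^ 2) * ∑ j ∈ Finset.Iic i, 1 / q j) (mem_univ (⟨0, hn⟩ : Fin n))
      have h2 : 0 ≤ (1 / (((⟨0,hn⟩ : Fin n) : ℝ) + 1) ^ 2) *
          ∑ j ∈ Finset.Iic (⟨0,hn⟩ : Fin n), 1 / q j := by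
        exact mul_nonneg (one_div_nonneg.mpr (sq_nonneg _))
          (Finset.sum_nonneg fun j _ => (one_div_pos.mpr (hq j)).le)
      exact h2.trans h1
    have hu0 : ∀ i, 0 ≤ u i := by
      intro i; rw [hu]; dsimp only
      split_ifs with h
      · exact div_nonneg (hfnn _) hfpos.le
      · exact le_rfl
    have hum : ∀ i j, i ≤ j → u j ≤ u i := by
      intro i j hij
      rw [hu]; dsimp only
      by_cases hjn : j < n
      · have hin : i < n := lt_of_le_of_lt hij hjn
        rw [dif_pos hjn, dif_pos hin]
        exact div_le_div_of_nonneg_right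
          (hfm (waux ⟨i,hin⟩ ⟨j,hjn⟩ (Fin.mk_le_mk.mpr hij))) hfpos.le
      · rw [dif_neg hjn]
        split_ifs with h
        · exact div_nonneg (hfnn _) hfpos.le
        · exact le_rfl
    have hun : u n = 0 := by rw [hu]; simp
    have hB : ∀ i < n, ∑ j ∈ Finset.range (i+1), b j ≤ M * ((i:ℝ)+1)^2 := by
      intro i hi
      have h1 := Finset.le_sup' (fun i : Fin n =>
        (1 / ((i : ℝ) + 1) ^ 2) * ∑ j ∈ Finset.Iic i, 1 / q j) (mem_univ (⟨i, hi⟩ : Fin n))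
      rw [← hMdef] at h1
      have h2 : ∑ j ∈ Finset.Iic (⟨i,hi⟩ : Fin n), 1/q j = ∑ j ∈ Finset.range (i+1), b j := by
        rw [sum_Iic_eq (fun j => 1/q j) ⟨i,hi⟩]
      dsimp only at h1
      rw [h2] at h1
      have hc : (0:ℝ) < ((i:ℝ)+1)^2 := by positivity
      rw [div_mul_eq_mul_div, one_mul, div_le_iff₀ hc] at h1
      linarith [h1]
    have hsum1 : ∑ i ∈ Finset.range n, u i = 1 := by
      have : ∑ i ∈ Finset.range n, u i = ∑ i : Fin n, f (w i) / S := by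
        rw [← Fin.sum_univ_eq_sum_range u n]
        apply Finset.sum_congr rfl
        intro i _
        rw [hu]; dsimp only
        rw [dif_pos i.isLt]
      rw [this, ← Finset.sum_div, ← hS, div_self hfpos.ne']
    have hgoal : ∑ i, (f (w i) / S) ^ 2 / q i = ∑ i ∈ Finset.range n, u i ^ 2 * b i := by
      rw [← Fin.sum_univ_eq_sum_range (fun i => u i ^ 2 * b i) n]
      apply Finset.sum_congr rfl
      intro i _
      rw [hu, hb]; dsimp only
      rw [dif_pos i.isLt, dif_pos i.isLt]
      rw [div_eq_mul_one_div]
    rw [hgoal]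
    calc ∑ i ∈ Finset.range n, u i ^ 2 * b i
        ≤ M * (∑ i ∈ Finset.range n, u i)^2 := main_ineq n u b M hM0 hu0 hum hun hB
      _ = M := by rw [hsum1]; ring
  -- conclude
  have hne : T.Nonempty := ⟨_, hmemb ⟨0, hn⟩⟩
  apply le_antisymm
  · exact csSup_le hne hub
  · obtain ⟨i₀, -, hi₀⟩ := Finset.exists_mem_eq_sup' (⟨⟨0, hn⟩, mem_univ _⟩ :
      (univ : Finset (Fin n)).Nonempty) (fun i : Fin n =>
        (1 / ((i : ℝ) + 1) ^ 2) * ∑ j ∈ Finset.Iic i, 1 / q j)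
    rw [← hMdef] at hi₀
    rw [hi₀]
    exact le_csSup ⟨M, hub⟩ (hmemb i₀)
end

section
/- Let w : Fin n → ℝ be a frequency vector with w_1 ≥ w_2 ≥ ... ≥ w_n > 0 and let c > 0 be such that for all i ∈ {1,...,n}, i · w_i ≥ c · Σ_{j=i+1}^n w_j. Define q'_i = w_i / (i·w_i + Σ_{j=i+1}^n w_j) and the pps probabilities q_i = q'_i / Σ_{k=1}^n q'_k. Then for every i: q'_i ≥ 1/(i·(1+1/c)) and Σ_{k=1}^n q'_k ≤ H_n, and consequently the universal emulation overhead satisfies max_{1≤i≤n} 1/(i·q_i) ≤ (1 + 1/c) · H_n. -/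
open Finset

/-- The base pps weights of the multi-objective concave-sublinear sample:
`q'_i = w_i / (i·w_i + ∑_{j>i} w_j)` (index `i : Fin n` has rank `i+1`). -/
noncomputable def qPrime {n : ℕ} (w : Fin n → ℝ) (i : Fin n) : ℝ :=
  w i / (((i : ℝ) + 1) * w i + ∑ j ∈ Finset.Ioi i, w j)

/-- if `i·w_i ≥ c·∑_{j>i} w_j` for all `i`, then `q'_i ≥ 1/(i(1+1/c))`,
`∑_k q'_k ≤ H_n`, and the universal emulation overhead of the normalized
probabilities `q_i = q'_i/∑_k q'_k` satisfies `max_i 1/(i·q_i) ≤ (1+1/c)·H_n`. -/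
theorem stmt_16 {n : ℕ} (hn : 0 < n) (w : Fin n → ℝ)
    (hpos : ∀ i, 0 < w i) (hmono : ∀ i j : Fin n, i ≤ j → w j ≤ w i)
    (c : ℝ) (hc : 0 < c)
    (hcond : ∀ i : Fin n, c * ∑ j ∈ Finset.Ioi i, w j ≤ ((i : ℝ) + 1) * w i) :
    (∀ i : Fin n, 1 / (((i : ℝ) + 1) * (1 + 1 / c)) ≤ qPrime w i) ∧
    (∑ k, qPrime w k) ≤ (∑ i : Fin n, 1 / ((i : ℝ) + 1)) ∧
    (univ.sup' ⟨⟨0, hn⟩, mem_univ _⟩ fun i : Fin n =>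
        1 / (((i : ℝ) + 1) * (qPrime w i / ∑ k, qPrime w k)))
      ≤ (1 + 1 / c) * ∑ j : Fin n, 1 / ((j : ℝ) + 1) := by
  have hip : ∀ i : Fin n, (0:ℝ) < (i : ℝ) + 1 := fun i => by positivity
  have hS : ∀ i : Fin n, (0:ℝ) ≤ ∑ j ∈ Finset.Ioi i, w j := fun i =>
    Finset.sum_nonneg fun j _ => (hpos j).le
  have hD : ∀ i : Fin n, (0:ℝ) < ((i : ℝ) + 1) * w i + ∑ j ∈ Finset.Ioi i, w j := fun i => by
    have := hpos i; have := hip i; nlinarith [hS i]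
  have hcf : (0:ℝ) < 1 + 1 / c := by positivity
  -- part 1
  have h1 : ∀ i : Fin n, 1 / (((i : ℝ) + 1) * (1 + 1 / c)) ≤ qPrime w i := by
    intro i
    have hDle : ((i : ℝ) + 1) * w i + ∑ j ∈ Finset.Ioi i, w j
        ≤ (((i : ℝ) + 1) * (1 + 1 / c)) * w i := by
      have h := hcond i
      have hS' : ∑ j ∈ Finset.Ioi i, w j ≤ ((i : ℝ) + 1) * w i / c := by
        rw [le_div_iff₀ hc]; linarith [h]
      have : (((i : ℝ) + 1) * (1 + 1 / c)) * w i
          = ((i : ℝ) + 1) * w i + ((i : ℝ) + 1) * w i / c := by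
        field_simp
      linarith [this.ge]
    rw [qPrime, div_le_div_iff₀ (by positivity) (hD i), one_mul]
    nlinarith [hDle, hpos i, mul_pos (hip i) hcf]
  have h2' : ∀ i : Fin n, qPrime w i ≤ 1 / ((i : ℝ) + 1) := by
    intro i
    rw [qPrime, div_le_div_iff₀ (hD i) (hip i)]
    nlinarith [hS i, hpos i]
  have h2 : (∑ k, qPrime w k) ≤ ∑ i : Fin n, 1 / ((i : ℝ) + 1) :=
    Finset.sum_le_sum fun i _ => h2' i
  refine ⟨h1, h2, ?_⟩
  have hqpos : ∀ i : Fin n, 0 < qPrime w i := fun i => div_pos (hpos i) (hD i)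
  have hQ : 0 < ∑ k, qPrime w k :=
    Finset.sum_pos (fun i _ => hqpos i) ⟨⟨0, hn⟩, mem_univ _⟩
  apply Finset.sup'_le
  intro i _
  have hHpos : 0 < ∑ j : Fin n, 1 / ((j : ℝ) + 1) :=
    Finset.sum_pos (fun j _ => by positivity) ⟨⟨0, hn⟩, mem_univ _⟩
  have key : 1 / (((i : ℝ) + 1) * (qPrime w i / ∑ k, qPrime w k))
      = (∑ k, qPrime w k) / (((i : ℝ) + 1) * qPrime w i) := by
    field_simp
  rw [key]
  rw [div_le_iff₀ (mul_pos (hip i) (hqpos i))]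
  calc (∑ k, qPrime w k) ≤ ∑ j : Fin n, 1 / ((j : ℝ) + 1) := h2
    _ ≤ (1 + 1 / c) * (∑ j : Fin n, 1 / ((j : ℝ) + 1)) * (((i : ℝ) + 1) * qPrime w i) := by
        have hq1 : 1 / (1 + 1 / c) ≤ ((i : ℝ) + 1) * qPrime w i := by
          have := h1 i
          calc 1 / (1 + 1 / c) = ((i : ℝ) + 1) * (1 / (((i : ℝ) + 1) * (1 + 1 / c))) := by
                field_simp
            _ ≤ ((i : ℝ) + 1) * qPrime w i := by
                exact mul_le_mul_of_nonneg_left this (hip i).le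
        have key2 : (1 + 1 / c) * (∑ j : Fin n, 1 / ((j : ℝ) + 1)) * (1 / (1 + 1 / c))
            = ∑ j : Fin n, 1 / ((j : ℝ) + 1) := by
          field_simp
        linarith [mul_le_mul_of_nonneg_left hq1 (mul_pos hcf hHpos).le, key2]
end

section
/- Let n be a positive integer, let F > 0 and S_w > 0 with F ≤ S_w (the f-value of a key and the total f-statistics), let A > 0 and S_a > 0 with A ≤ S_a (the f-value of the key's advice and the total advised f-statistics), and let c_p, c_u > 0 and k ≥ 1 be reals. Suppose F/S_w ≤ max{ c_p · A/S_a , c_u/n }, and let k_u, k_p be reals with k_u − 2 ≥ k·c_u and k_p − 2 ≥ k·c_p. Then min{ n·F² / (k_u − 2) , S_a·F² / ((k_p − 2)·A) } ≤ F·S_w / k. (The left-hand side is the minimum of the variance bounds of a uniform sample of size k_u and a weighted-by-advice sample of size k_p, and the right-hand side is the benchmark pps variance bound with sample size k.) -/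
/-- the per-key variance bound of the sample-by-advice sketch (the
minimum of the uniform-sample bound with `k_u` keys and the by-advice bound with
`k_p` keys) is at most the benchmark pps variance bound `F·S_w/k`, provided
`F/S_w ≤ max(c_p·A/S_a, c_u/n)`, `k_u - 2 ≥ k·c_u` and `k_p - 2 ≥ k·c_p`. -/
theorem stmt_18 (n : ℕ) (hn : 0 < n) (F Sw A Sa : ℝ)
    (hF : 0 < F) (hSw : 0 < Sw) (hFSw : F ≤ Sw)
    (hA : 0 < A) (hSa : 0 < Sa) (hASa : A ≤ Sa)
    (cp cu k : ℝ) (hcp : 0 < cp) (hcu : 0 < cu) (hk : 1 ≤ k)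
    (hmax : F / Sw ≤ max (cp * (A / Sa)) (cu / n))
    (ku kp : ℝ) (hku : k * cu ≤ ku - 2) (hkp : k * cp ≤ kp - 2) :
    min ((n : ℝ) * F ^ 2 / (ku - 2)) (Sa * F ^ 2 / ((kp - 2) * A))
      ≤ F * Sw / k := by
  have hk0 : (0:ℝ) < k := lt_of_lt_of_le one_pos hk
  have hkcu : (0:ℝ) < k * cu := mul_pos hk0 hcu
  have hkcp : (0:ℝ) < k * cp := mul_pos hk0 hcp
  have hku0 : (0:ℝ) < ku - 2 := lt_of_lt_of_le hkcu hku
  have hkp0 : (0:ℝ) < kp - 2 := lt_of_lt_of_le hkcp hkp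
  have hn0 : (0:ℝ) < (n:ℝ) := Nat.cast_pos.mpr hn
  rcases le_total (cp * (A / Sa)) (cu / n) with h | h
  · -- uniform case: F/Sw ≤ cu/n
    have hF' : F / Sw ≤ cu / n := le_trans hmax (by rw [max_eq_right h])
    have h1 : (n:ℝ) * F ≤ cu * Sw := by
      rw [div_le_div_iff₀ hSw hn0] at hF'
      linarith
    calc min ((n : ℝ) * F ^ 2 / (ku - 2)) (Sa * F ^ 2 / ((kp - 2) * A))
        ≤ (n : ℝ) * F ^ 2 / (ku - 2) := min_le_left _ _
      _ ≤ (n : ℝ) * F ^ 2 / (k * cu) := by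
          apply div_le_div_of_nonneg_left (by positivity) hkcu hku
      _ ≤ F * Sw / k := by
          rw [div_le_div_iff₀ hkcu hk0]
          have : (n:ℝ) * F ^ 2 ≤ cu * Sw * F := by
            have := mul_le_mul_of_nonneg_right h1 hF.le
            nlinarith
          nlinarith
  · -- advice case: F/Sw ≤ cp * A/Sa
    have hF' : F / Sw ≤ cp * (A / Sa) := le_trans hmax (by rw [max_eq_left h])
    have h1 : F * Sa ≤ cp * A * Sw := by
      rw [div_le_iff₀ hSw] at hF'
      have hx : cp * (A / Sa) * Sw * Sa = cp * A * Sw := by field_simp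
      nlinarith [mul_le_mul_of_nonneg_right hF' hSa.le]
    calc min ((n : ℝ) * F ^ 2 / (ku - 2)) (Sa * F ^ 2 / ((kp - 2) * A))
        ≤ Sa * F ^ 2 / ((kp - 2) * A) := min_le_right _ _
      _ ≤ Sa * F ^ 2 / (k * cp * A) := by
          apply div_le_div_of_nonneg_left (by positivity) (by positivity)
          exact mul_le_mul_of_nonneg_right hkp hA.le
      _ ≤ F * Sw / k := by
          rw [div_le_div_iff₀ (by positivity) hk0]
          nlinarith [mul_le_mul_of_nonneg_left h1 (mul_pos hF hk0).le]
end
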